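/- Let G be a bipartite graph on {x_1,...,x_n} ∪ {y_1,...,y_n} satisfying the Herzog–Hibi conditions, with N(y_n) = {x_{i_1},...,x_{i_s}, x_n}. Then every minimal vertex cover of G contains exactly one of x_n and y_n, and the cover ideal decomposes as I(G)^∨ = y_n · I(G \ {y_n})^∨ + (x_{i_1}···x_{i_s} x_n) · I(G \ ({y_n} ∪ N(y_n)))^∨. -/

import Mathlib

set_option linter.unusedSectionVars false
set_option linter.unusedVariables false
open scoped Pointwise

/-- The Herzog–Hibi conditions for a bipartite graph on `{x_1,…,x_n} ∪ {y_1,…,y_n}`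
(`x_i = Sum.inl i`, `y_j = Sum.inr j`): the graph is bipartite with respect to this
partition, `{x_i, y_i}` is an edge for all `i`, `{x_i, y_j} ∈ E` implies `i ≤ j`, and
`{x_i,y_j}, {x_j,y_l} ∈ E` with `i < j < l` implies `{x_i, y_l} ∈ E`. -/
def IsHHGraph {n : ℕ} (G : SimpleGraph (Fin n ⊕ Fin n)) : Prop :=
  (∀ i i' : Fin n, ¬ G.Adj (Sum.inl i) (Sum.inl i')) ∧
  (∀ i i' : Fin n, ¬ G.Adj (Sum.inr i) (Sum.inr i')) ∧
  (∀ i : Fin n, G.Adj (Sum.inl i) (Sum.inr i)) ∧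
  (∀ i j : Fin n, G.Adj (Sum.inl i) (Sum.inr j) → i ≤ j) ∧
  (∀ i j l : Fin n, i < j → j < l → G.Adj (Sum.inl i) (Sum.inr j) →
    G.Adj (Sum.inl j) (Sum.inr l) → G.Adj (Sum.inl i) (Sum.inr l))

/-- Delete a set of vertices from a graph (removing all incident edges), keeping the
ambient vertex type. -/
def deleteVerts {V : Type*} (G : SimpleGraph V) (D : Set V) : SimpleGraph V where
  Adj a b := G.Adj a b ∧ a ∉ D ∧ b ∉ D
  symm := ⟨fun a b h => ⟨G.symm.symm _ _ h.1, h.2.2, h.2.1⟩⟩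
  loopless := ⟨fun a h => G.loopless.irrefl a h.1⟩

/-- A vertex cover of `G`. -/
def IsVertexCover {V : Type*} (G : SimpleGraph V) (W : Set V) : Prop :=
  ∀ a b, G.Adj a b → a ∈ W ∨ b ∈ W

/-- A minimal vertex cover of `G`. -/
def IsMinVertexCover {V : Type*} (G : SimpleGraph V) (W : Set V) : Prop :=
  IsVertexCover G W ∧ ∀ W' ⊆ W, IsVertexCover G W' → W' = W

/-- The cover ideal `I(G)^∨` of a graph, generated by the squarefree monomials
corresponding to the minimal vertex covers of `G`; it is the Alexander dual of the
edge ideal. -/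
noncomputable def coverIdeal {V : Type*} [Fintype V] (k : Type*) [Field k]
    (G : SimpleGraph V) : Ideal (MvPolynomial V k) :=
  Ideal.span {p | ∃ W : Finset V, IsMinVertexCover G ↑W ∧ p = ∏ v ∈ W, MvPolynomial.X v}

/-- The edge ideal of a simple graph. -/
noncomputable def edgeIdeal {V : Type*} (k : Type*) [Field k] (G : SimpleGraph V) :
    Ideal (MvPolynomial V k) :=
  Ideal.span {p | ∃ u v, G.Adj u v ∧ p = MvPolynomial.X u * MvPolynomial.X v}

section Aux

variable {V : Type*} (G : SimpleGraph V)

lemma not_mem_minCover_of_isolated {W : Set V} (hW : IsMinVertexCover G W)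
    {v : V} (hv : ∀ u, ¬ G.Adj v u) : v ∉ W := by
  intro hvW
  have hcov : IsVertexCover G (W \ {v}) := by
    intro a b hab
    rcases hW.1 a b hab with h | h
    · exact Or.inl ⟨h, fun he => hv b (he ▸ hab)⟩
    · exact Or.inr ⟨h, fun he => hv a (he ▸ hab.symm)⟩
  have heq := hW.2 _ Set.diff_subset hcov
  rw [← heq] at hvW
  exact hvW.2 rfl

lemma minCover_delete_disjoint {D W : Set V}
    (hW : IsMinVertexCover (deleteVerts G D) W) : ∀ v ∈ D, v ∉ W :=
  fun v hv => not_mem_minCover_of_isolated _ hW (fun u h => h.2.1 hv)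

lemma minCover_sdiff {D W : Set V} (hW : IsMinVertexCover G W)
    (hD : ∀ a b, G.Adj a b → a ∈ D → a ∈ W ∩ D ∨ b ∈ W ∩ D) :
    IsMinVertexCover (deleteVerts G D) (W \ D) := by
  constructor
  · intro a b hab
    rcases hW.1 a b hab.1 with h | h
    · exact Or.inl ⟨h, hab.2.1⟩
    · exact Or.inr ⟨h, hab.2.2⟩
  · intro U hU hUc
    have hcov : IsVertexCover G (U ∪ (W ∩ D)) := by
      intro a b hab
      by_cases ha : a ∈ D
      · rcases hD a b hab ha with h | h
        · exact Or.inl (Or.inr h)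
        · exact Or.inr (Or.inr h)
      · by_cases hb : b ∈ D
        · rcases hD b a hab.symm hb with h | h
          · exact Or.inr (Or.inr h)
          · exact Or.inl (Or.inr h)
        · rcases hUc a b ⟨hab, ha, hb⟩ with h | h
          · exact Or.inl (Or.inl h)
          · exact Or.inr (Or.inl h)
    have hsub : U ∪ (W ∩ D) ⊆ W :=
      Set.union_subset (hU.trans Set.diff_subset) Set.inter_subset_left
    have hEq := hW.2 _ hsub hcov
    ext v
    constructor
    · intro hv; exact hU hv
    · intro hv
      have hv' : v ∈ U ∪ (W ∩ D) := by rw [hEq]; exact hv.1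
      rcases hv' with h | h
      · exact h
      · exact absurd h.2 hv.2

lemma minCover_union {D A W' : Set V} (hA : A ⊆ D)
    (hW' : IsMinVertexCover (deleteVerts G D) W')
    (hDA : ∀ a b, G.Adj a b → a ∈ D → a ∈ A ∨ b ∈ A)
    (hfree : ∀ a ∈ A, ∃ b, G.Adj a b ∧ b ∉ A ∪ W') :
    IsMinVertexCover G (A ∪ W') := by
  have hW'D : ∀ v ∈ D, v ∉ W' := minCover_delete_disjoint G hW'
  constructor
  · intro a b hab
    by_cases ha : a ∈ D
    · rcases hDA a b hab ha with h | h
      · exact Or.inl (Or.inl h)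
      · exact Or.inr (Or.inl h)
    · by_cases hb : b ∈ D
      · rcases hDA b a hab.symm hb with h | h
        · exact Or.inr (Or.inl h)
        · exact Or.inl (Or.inl h)
      · rcases hW'.1 a b ⟨hab, ha, hb⟩ with h | h
        · exact Or.inl (Or.inr h)
        · exact Or.inr (Or.inr h)
  · intro U hU hUc
    have hAU : A ⊆ U := by
      intro a ha
      obtain ⟨b, hab, hb⟩ := hfree a ha
      rcases hUc a b hab with h | h
      · exact h
      · exact absurd (hU h) hb
    have hUA : U \ A ⊆ W' := by
      intro v hv
      rcases hU hv.1 with h | h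
      · exact absurd h hv.2
      · exact h
    have hcov : IsVertexCover (deleteVerts G D) (U \ A) := by
      intro a b hab
      rcases hUc a b hab.1 with h | h
      · exact Or.inl ⟨h, fun hA' => hab.2.1 (hA hA')⟩
      · exact Or.inr ⟨h, fun hA' => hab.2.2 (hA hA')⟩
    have hEq := hW'.2 _ hUA hcov
    apply Set.Subset.antisymm hU
    apply Set.union_subset hAU
    rw [← hEq]
    exact Set.diff_subset.trans (fun v hv => hv)

end Aux

/-- for a Herzog–Hibi bipartite graph `G` with
`N(y_n) = {x_{i_1},…,x_{i_s}, x_n}`, every minimal vertex cover contains exactly one of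
`x_n` and `y_n`, and the cover ideal decomposes as
`I(G)^∨ = y_n · I(G \ {y_n})^∨ + (x_{i_1}⋯x_{i_s} x_n) · I(G \ ({y_n} ∪ N(y_n)))^∨`. -/
theorem coverIdeal_decomposition {n : ℕ} (k : Type*) [Field k]
    (G : SimpleGraph (Fin (n + 1) ⊕ Fin (n + 1))) [DecidableRel G.Adj]
    (hG : IsHHGraph G) :
    (∀ W : Set (Fin (n + 1) ⊕ Fin (n + 1)), IsMinVertexCover G W →
      Xor' (Sum.inl (Fin.last n) ∈ W) (Sum.inr (Fin.last n) ∈ W)) ∧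
    coverIdeal k G =
      Ideal.span {(MvPolynomial.X (Sum.inr (Fin.last n)) :
          MvPolynomial (Fin (n + 1) ⊕ Fin (n + 1)) k)} *
        coverIdeal k (deleteVerts G {Sum.inr (Fin.last n)}) +
      Ideal.span {∏ i ∈ Finset.univ.filter
            (fun i : Fin (n + 1) => G.Adj (Sum.inl i) (Sum.inr (Fin.last n))),
          (MvPolynomial.X (Sum.inl i) : MvPolynomial (Fin (n + 1) ⊕ Fin (n + 1)) k)} *
        coverIdeal k (deleteVerts G
          ({Sum.inr (Fin.last n)} ∪
            {w | ∃ i : Fin (n + 1),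
              G.Adj (Sum.inl i) (Sum.inr (Fin.last n)) ∧ w = Sum.inl i})) := by
  classical
  set xx : Fin (n + 1) ⊕ Fin (n + 1) := Sum.inl (Fin.last n) with hxxdef
  set yy : Fin (n + 1) ⊕ Fin (n + 1) := Sum.inr (Fin.last n) with hyydef
  have hxy : G.Adj xx yy := hG.2.2.1 _
  have hxne : xx ≠ yy := by simp [hxxdef, hyydef]
  -- xx's only neighbor is yy
  have hxonly : ∀ u, G.Adj xx u → u = yy := by
    intro u hu
    cases u with
    | inl i => exact absurd hu (hG.1 _ _)
    | inr j =>
      have := hG.2.2.2.1 _ _ hu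
      have : j = Fin.last n := le_antisymm (Fin.le_last j) this
      rw [this]
  -- neighbors of yy are of the form inl i
  have hynbr : ∀ u, G.Adj u yy → ∃ i, u = Sum.inl i ∧ G.Adj (Sum.inl i) yy := by
    intro u hu
    cases u with
    | inl i => exact ⟨i, rfl, hu⟩
    | inr j => exact absurd hu (hG.2.1 _ _)
  -- Part 1: the Xor statement
  have part1 : ∀ W : Set (Fin (n + 1) ⊕ Fin (n + 1)), IsMinVertexCover G W →
      Xor' (xx ∈ W) (yy ∈ W) := by
    intro W hW
    have hor := hW.1 xx yy hxy
    have hnotboth : ¬ (xx ∈ W ∧ yy ∈ W) := by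
      rintro ⟨hx, hy⟩
      have hcov : IsVertexCover G (W \ {xx}) := by
        intro a b hab
        rcases hW.1 a b hab with h | h
        · by_cases ha : a = xx
          · subst ha
            have hb : b = yy := hxonly b hab
            subst hb
            exact Or.inr ⟨hy, fun he => hxne he.symm⟩
          · exact Or.inl ⟨h, ha⟩
        · by_cases hb : b = xx
          · subst hb
            have ha : a = yy := hxonly a hab.symm
            subst ha
            exact Or.inl ⟨hy, fun he => hxne he.symm⟩
          · exact Or.inr ⟨h, hb⟩
      have heq := hW.2 _ Set.diff_subset hcov
      rw [← heq] at hx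
      exact hx.2 rfl
    rcases hor with h | h
    · exact Or.inl ⟨h, fun hy => hnotboth ⟨h, hy⟩⟩
    · exact Or.inr ⟨h, fun hx => hnotboth ⟨hx, h⟩⟩
  refine ⟨part1, ?_⟩
  -- notation for the two deleted-vertex graphs and generating sets
  set Nset : Set (Fin (n + 1) ⊕ Fin (n + 1)) :=
    {w | ∃ i : Fin (n + 1), G.Adj (Sum.inl i) yy ∧ w = Sum.inl i} with hNsetdef
  set D2 : Set (Fin (n + 1) ⊕ Fin (n + 1)) := {yy} ∪ Nset with hD2def
  set Nfin : Finset (Fin (n + 1) ⊕ Fin (n + 1)) :=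
    (Finset.univ.filter (fun i : Fin (n + 1) => G.Adj (Sum.inl i) yy)).image Sum.inl
    with hNfindef
  have hNcoe : (↑Nfin : Set (Fin (n + 1) ⊕ Fin (n + 1))) = Nset := by
    ext w
    simp only [hNfindef, hNsetdef, Finset.coe_image, Finset.coe_filter,
      Finset.mem_univ, true_and, Set.mem_image, Set.mem_setOf_eq]
    constructor
    · rintro ⟨i, hi, rfl⟩; exact ⟨i, hi, rfl⟩
    · rintro ⟨i, hi, rfl⟩; exact ⟨i, hi, rfl⟩
  set m : MvPolynomial (Fin (n + 1) ⊕ Fin (n + 1)) k :=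
    ∏ i ∈ Finset.univ.filter (fun i : Fin (n + 1) => G.Adj (Sum.inl i) yy),
      MvPolynomial.X (Sum.inl i) with hmdef
  have hm : m = ∏ v ∈ Nfin, MvPolynomial.X v := by
    rw [hmdef, hNfindef]
    exact (Finset.prod_image (fun a _ b _ h => Sum.inl_injective h)).symm
  -- the key set identity
  have key :
      {p : MvPolynomial (Fin (n + 1) ⊕ Fin (n + 1)) k |
        ∃ W : Finset (Fin (n + 1) ⊕ Fin (n + 1)), IsMinVertexCover G ↑W ∧
          p = ∏ v ∈ W, MvPolynomial.X v} =
      (({MvPolynomial.X yy} : Set (MvPolynomial (Fin (n + 1) ⊕ Fin (n + 1)) k)) *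
        {p : MvPolynomial (Fin (n + 1) ⊕ Fin (n + 1)) k | ∃ W : Finset (Fin (n + 1) ⊕ Fin (n + 1)),
          IsMinVertexCover (deleteVerts G {yy}) ↑W ∧
          p = ∏ v ∈ W, MvPolynomial.X v}) ∪
      (({m} : Set (MvPolynomial (Fin (n + 1) ⊕ Fin (n + 1)) k)) *
        {p : MvPolynomial (Fin (n + 1) ⊕ Fin (n + 1)) k | ∃ W : Finset (Fin (n + 1) ⊕ Fin (n + 1)),
          IsMinVertexCover (deleteVerts G D2) ↑W ∧
          p = ∏ v ∈ W, MvPolynomial.X v}) := by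
    ext p
    simp only [Set.mem_union, Set.mem_mul, Set.mem_singleton_iff, Set.mem_setOf_eq]
    constructor
    · rintro ⟨W, hW, rfl⟩
      by_cases hy : yy ∈ W
      · left
        refine ⟨MvPolynomial.X yy, rfl, ∏ v ∈ W.erase yy, MvPolynomial.X v,
          ⟨W.erase yy, ?_, rfl⟩, Finset.mul_prod_erase W _ hy⟩
        rw [Finset.coe_erase]
        exact minCover_sdiff G hW
          (fun a b hab ha => Or.inl ⟨by rwa [ha], ha⟩)
      · right
        have hNsub : Nfin ⊆ W := by
          intro v hv
          have hv' : v ∈ Nset := by rw [← hNcoe]; exact_mod_cast hv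
          obtain ⟨i, hi, rfl⟩ := hv'
          rcases hW.1 _ _ hi with h | h
          · exact h
          · exact absurd h hy
        refine ⟨m, rfl, ∏ v ∈ W \ Nfin, MvPolynomial.X v,
          ⟨W \ Nfin, ?_, rfl⟩, by rw [hm, mul_comm]; exact Finset.prod_sdiff hNsub⟩
        have hco : (↑(W \ Nfin) : Set (Fin (n + 1) ⊕ Fin (n + 1))) = ↑W \ D2 := by
          rw [Finset.coe_sdiff, hNcoe, hD2def]
          ext v
          simp only [Set.mem_diff, Set.mem_union, Set.mem_singleton_iff]
          constructor
          · rintro ⟨hvW, hvN⟩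
            refine ⟨hvW, ?_⟩
            rintro (rfl | h)
            · exact hy hvW
            · exact hvN h
          · rintro ⟨hvW, hv⟩
            exact ⟨hvW, fun h => hv (Or.inr h)⟩
        rw [hco]
        apply minCover_sdiff G hW
        intro a b hab ha
        rcases ha with ha | ha
        · -- a = yy, so b is a neighbor of yy
          rw [Set.mem_singleton_iff] at ha
          subst ha
          obtain ⟨i, rfl, hi⟩ := hynbr b hab.symm
          have hbN : Sum.inl i ∈ Nset := ⟨i, hi, rfl⟩
          have hbW : Sum.inl i ∈ W := by
            have : Sum.inl i ∈ Nfin := by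
              rw [← hNcoe] at hbN; exact_mod_cast hbN
            exact hNsub this
          exact Or.inr ⟨hbW, Or.inr hbN⟩
        · have haW : a ∈ W := by
            have : a ∈ Nfin := by rw [← hNcoe] at ha; exact_mod_cast ha
            exact hNsub this
          exact Or.inl ⟨haW, Or.inr ha⟩
    · rintro (⟨q, rfl, t, ⟨W', hW', rfl⟩, rfl⟩ | ⟨q, rfl, t, ⟨W'', hW'', rfl⟩, rfl⟩)
      · -- reconstruct from a cover of G \ {yy}
        have hyW' : yy ∉ (↑W' : Set (Fin (n + 1) ⊕ Fin (n + 1))) :=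
          minCover_delete_disjoint G hW' yy rfl
        have hxW' : xx ∉ (↑W' : Set (Fin (n + 1) ⊕ Fin (n + 1))) := by
          apply not_mem_minCover_of_isolated _ hW'
          rintro u ⟨hadj, _, hu⟩
          exact hu (hxonly u hadj)
        refine ⟨insert yy W', ?_, (Finset.prod_insert (by exact_mod_cast hyW')).symm⟩
        rw [Finset.coe_insert, Set.insert_eq]
        apply minCover_union G (le_refl _) hW'
        · intro a b hab ha
          exact Or.inl ha
        · intro a ha
          rw [Set.mem_singleton_iff] at ha
          subst ha
          refine ⟨xx, hxy.symm, ?_⟩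
          rintro (h | h)
          · exact hxne (Set.mem_singleton_iff.mp h)
          · exact hxW' h
      · -- reconstruct from a cover of G \ D2
        have hdisj : ∀ v ∈ D2, v ∉ (↑W'' : Set (Fin (n + 1) ⊕ Fin (n + 1))) :=
          minCover_delete_disjoint G hW''
        have hNdisj : Disjoint Nfin W'' := by
          rw [Finset.disjoint_left]
          intro v hv
          have hv' : v ∈ Nset := by rw [← hNcoe]; exact_mod_cast hv
          intro hvW
          exact hdisj v (Or.inr hv') (by exact_mod_cast hvW)
        refine ⟨Nfin ∪ W'', ?_, by rw [hm, Finset.prod_union hNdisj]⟩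
        rw [Finset.coe_union, hNcoe]
        apply minCover_union G Set.subset_union_right hW''
        · intro a b hab ha
          rcases ha with ha | ha
          · rw [Set.mem_singleton_iff] at ha
            subst ha
            obtain ⟨i, rfl, hi⟩ := hynbr b hab.symm
            exact Or.inr ⟨i, hi, rfl⟩
          · exact Or.inl ha
        · intro a ha
          obtain ⟨i, hi, rfl⟩ := ha
          refine ⟨yy, hi, ?_⟩
          rintro (h | h)
          · obtain ⟨j, _, hj⟩ := h
            exact Sum.inl_ne_inr (hj.symm.trans rfl) |>.elim
          · exact hdisj yy (Or.inl rfl) h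
    -- end of key
  rw [coverIdeal, coverIdeal, coverIdeal, Ideal.span_mul_span', Ideal.span_mul_span',
    Submodule.add_eq_sup, ← Ideal.span_union]
  exact congrArg Ideal.span key
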